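/- Fix a dimension p ≥ 1, β > 0 and Δ ≥ 0 with βΔ² ≤ p/2, and define f : [0,∞) → ℝ by f(t) = 1 − (1+2βt)^{−p} exp(−2βΔ²/(1+2βt)). Then f'(t) > 0 for all t > 0, and consequently f(t) ≥ f(0) for all t ≥ 0. -/

import Mathlib

/-- **Proposition 2, 'only if' direction.** For `p ≥ 1`, `β > 0`, `Δ ≥ 0` with `βΔ² ≤ p/2`,
the function `f t = 1 - (1+2βt)^(-p) * exp(-2βΔ²/(1+2βt))` has `f' t > 0` for all `t > 0`,
and consequently `f t ≥ f 0` for all `t ≥ 0`. -/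
theorem kale_mse_increasing_of_small_signal
    (p : ℕ) (hp : 1 ≤ p) (β Δ : ℝ) (hβ : 0 < β) (hΔ : 0 ≤ Δ)
    (hsmall : β * Δ ^ 2 ≤ (p : ℝ) / 2)
    (f : ℝ → ℝ)
    (hf : ∀ t : ℝ, 0 ≤ t →
      f t = 1 - (1 + 2 * β * t) ^ (-(p : ℝ)) * Real.exp (-2 * β * Δ ^ 2 / (1 + 2 * β * t))) :
    (∀ t : ℝ, 0 < t → 0 < deriv f t) ∧ (∀ t : ℝ, 0 ≤ t → f 0 ≤ f t) := by
  set c : ℝ := 2 * β * Δ ^ 2 with hc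
  set F : ℝ → ℝ := fun t => 1 - Real.exp (-(p:ℝ) * Real.log (1 + 2*β*t) - c/(1+2*β*t)) with hF
  have hc_le : c ≤ (p:ℝ) := by rw [hc]; nlinarith
  have hc0 : 0 ≤ c := by positivity
  have hp1 : (1:ℝ) ≤ (p:ℝ) := by exact_mod_cast hp
  have hu : ∀ t : ℝ, 0 ≤ t → (0:ℝ) < 1 + 2*β*t := by intro t ht; nlinarith
  have hfF : ∀ t, 0 ≤ t → f t = F t := by
    intro t ht
    rw [hf t ht, hF]
    have hut := hu t ht
    rw [Real.rpow_def_of_pos hut, ← Real.exp_add]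
    congr 2
    rw [hc]; ring
  have hFderiv : ∀ t : ℝ, 0 < 1 + 2*β*t →
      HasDerivAt F (Real.exp (-(p:ℝ)*Real.log (1+2*β*t) - c/(1+2*β*t)) *
        ((p:ℝ)*(2*β)/(1+2*β*t) - c*(2*β)/(1+2*β*t)^2)) t := by
    intro t hut
    have hu' : HasDerivAt (fun t : ℝ => 1 + 2*β*t) (2*β) t := by
      simpa using ((hasDerivAt_id t).const_mul (2*β)).const_add 1
    have hlog : HasDerivAt (fun t => Real.log (1+2*β*t)) ((1+2*β*t)⁻¹ * (2*β)) t :=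
      by have := (Real.hasDerivAt_log hut.ne').comp t hu'; exact this
    have hinv : HasDerivAt (fun t => (1+2*β*t)⁻¹) (-(2*β)/(1+2*β*t)^2) t := by
      exact hu'.inv hut.ne'
    have hh : HasDerivAt (fun t => -(p:ℝ)*Real.log (1+2*β*t) - c/(1+2*β*t))
        (-(p:ℝ) * ((1+2*β*t)⁻¹ * (2*β)) - c * (-(2*β)/(1+2*β*t)^2)) t := by
      have := (hlog.const_mul (-(p:ℝ))).sub (hinv.const_mul c)
      simp only [div_eq_mul_inv] at this ⊢
      exact this
    have hexp := hh.exp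
    have hfinal := (hasDerivAt_const t (1:ℝ)).sub hexp
    exact hfinal.congr_deriv (by ring)
  have hDpos : ∀ t : ℝ, 0 < t →
      0 < Real.exp (-(p:ℝ)*Real.log (1+2*β*t) - c/(1+2*β*t)) *
        ((p:ℝ)*(2*β)/(1+2*β*t) - c*(2*β)/(1+2*β*t)^2) := by
    intro t ht
    have hut : (1:ℝ) < 1 + 2*β*t := by nlinarith
    have hut0 : (0:ℝ) < 1 + 2*β*t := by linarith
    apply mul_pos (Real.exp_pos _)
    rw [div_sub_div _ _ hut0.ne' (by positivity), div_pos_iff]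
    left
    constructor
    · have h1 : (0:ℝ) < (p:ℝ)*(1+2*β*t) - c := by nlinarith
      nlinarith [mul_pos (mul_pos (by positivity : (0:ℝ) < 2*β) hut0) h1]
    · positivity
  have hderiv_eq : ∀ t : ℝ, 0 < t → deriv f t =
      Real.exp (-(p:ℝ)*Real.log (1+2*β*t) - c/(1+2*β*t)) *
        ((p:ℝ)*(2*β)/(1+2*β*t) - c*(2*β)/(1+2*β*t)^2) := by
    intro t ht
    have hev : f =ᶠ[nhds t] F :=
      Filter.eventuallyEq_of_mem (Ioi_mem_nhds ht) (fun x hx => hfF x (le_of_lt hx))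
    rw [hev.deriv_eq]
    exact (hFderiv t (hu t ht.le)).deriv
  have part1 : ∀ t : ℝ, 0 < t → 0 < deriv f t := by
    intro t ht
    rw [hderiv_eq t ht]
    exact hDpos t ht
  refine ⟨part1, ?_⟩
  have hcont : ContinuousOn f (Set.Ici 0) := by
    apply ContinuousOn.congr _ (fun x hx => hfF x hx)
    exact fun t ht => ((hFderiv t (hu t ht)).continuousAt).continuousWithinAt
  have hmono : StrictMonoOn f (Set.Ici 0) := by
    apply strictMonoOn_of_deriv_pos (convex_Ici 0) hcont
    intro x hx
    rw [interior_Ici] at hx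
    exact part1 x hx
  intro t ht
  rcases eq_or_lt_of_le ht with h | h
  · rw [← h]
  · exact le_of_lt (hmono (Set.mem_Ici.mpr le_rfl) ht h)
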